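/- Under the stated hypotheses, the Long–Moody matrices satisfy the far commutation relation: S_i S_j = S_j S_i for all 1 ≤ i, j ≤ n−1 with |i−j| ≥ 2. -/
import Mathlib


open Matrix

namespace KLM

variable {k : Type*} [Field k]

/-- Assemble an `Nn × Nn` matrix from an `n × n` array of `N × N` blocks,
blocks being indexed by natural numbers (only indices `< n` are relevant). -/
def blk (n N : ℕ) (B : ℕ → ℕ → Matrix (Fin N) (Fin N) k) :
    Matrix (Fin n × Fin N) (Fin n × Fin N) k :=
  Matrix.of fun p q => B p.1.1 q.1.1 p.2 q.2

/-- The Dettweiler–Reiter convolution matrix `G_j = ρ^{DR}_λ(x_j)` (0-based index `j`):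
the identity except that the `j`-th block row is
`(λ(g_0−1), …, λ(g_{j−1}−1), λ g_j, g_{j+1}−1, …, g_{n−1}−1)`. -/
def G (n N : ℕ) (g : ℕ → Matrix (Fin N) (Fin N) k) (lam : k) (j : ℕ) :
    Matrix (Fin n × Fin N) (Fin n × Fin N) k :=
  blk n N fun r c =>
    if r = j then
      (if c < j then lam • (g c - 1) else if c = j then lam • g j else g c - 1)
    else if r = c then 1 else 0

/-- The Long–Moody matrix `S_i = ρ^{LM}(σ_i)` (0-based index `i`):
`(s_i ⊕ ⋯ ⊕ s_i) · diag(1, …, 1, R_i, 1, …, 1)` where `R_i` is the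
`2×2` block matrix with rows `(0, g_i)` and `(1, 1 − g_{i+1})`
placed in block rows/columns `i, i+1`. -/
def S (n N : ℕ) (g s : ℕ → Matrix (Fin N) (Fin N) k) (i : ℕ) :
    Matrix (Fin n × Fin N) (Fin n × Fin N) k :=
  blk n N fun r c =>
    if r = i ∧ c = i then 0
    else if r = i ∧ c = i + 1 then s i * g i
    else if r = i + 1 ∧ c = i then s i
    else if r = i + 1 ∧ c = i + 1 then s i * (1 - g (i + 1))
    else if r = c then s i
    else 0

/-! ### Auxiliary machinery: block-diagonal factor and corner correction -/

/-- Block-diagonal matrix with constant diagonal block `s0`. -/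
def Dm (n N : ℕ) (s0 : Matrix (Fin N) (Fin N) k) :
    Matrix (Fin n × Fin N) (Fin n × Fin N) k :=
  blk n N fun r c => if r = c then s0 else 0

/-- Block function of the "correction" `R_i − 1`, supported on the `2×2` window
at rows/columns `i, i+1`. -/
def Cf (N : ℕ) (g : ℕ → Matrix (Fin N) (Fin N) k) (i : ℕ) :
    ℕ → ℕ → Matrix (Fin N) (Fin N) k := fun r c =>
  if r = i ∧ c = i then -1
  else if r = i ∧ c = i + 1 then g i
  else if r = i + 1 ∧ c = i then 1
  else if r = i + 1 ∧ c = i + 1 then -(g (i + 1))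
  else 0

/-- The matrix of `Cf`. -/
def Cm (n N : ℕ) (g : ℕ → Matrix (Fin N) (Fin N) k) (i : ℕ) :
    Matrix (Fin n × Fin N) (Fin n × Fin N) k :=
  blk n N (Cf N g i)

lemma blk_ext {n N : ℕ} {F F' : ℕ → ℕ → Matrix (Fin N) (Fin N) k}
    (h : ∀ r c : Fin n, F (r:ℕ) (c:ℕ) = F' (r:ℕ) (c:ℕ)) : blk n N F = blk n N F' := by
  ext p q
  exact congrFun (congrFun (h p.1 q.1) p.2) q.2

lemma blk_mul {n N : ℕ} (F G' : ℕ → ℕ → Matrix (Fin N) (Fin N) k) :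
    blk n N F * blk n N G' =
      blk n N (fun r c => ∑ t : Fin n, F r (t:ℕ) * G' (t:ℕ) c) := by
  ext p q
  simp [blk, Matrix.mul_apply, Fintype.sum_prod_type, Matrix.sum_apply]

lemma blk_add {n N : ℕ} (F G' : ℕ → ℕ → Matrix (Fin N) (Fin N) k) :
    blk n N (fun r c => F r c + G' r c) = blk n N F + blk n N G' := by
  ext p q; simp [blk]

lemma blk_zero {n N : ℕ} : blk n N (fun _ _ => (0 : Matrix (Fin N) (Fin N) k)) = 0 := by
  ext p q; simp [blk]

lemma blk_one {n N : ℕ} :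
    blk n N (fun r c => if r = c then (1 : Matrix (Fin N) (Fin N) k) else 0) = 1 := by
  ext p q
  rcases p with ⟨p1, p2⟩; rcases q with ⟨q1, q2⟩
  by_cases h : p1 = q1
  · subst h
    simp [blk, Matrix.one_apply, Prod.ext_iff]
  · have h' : (p1 : ℕ) ≠ (q1 : ℕ) := fun hh => h (Fin.ext hh)
    simp [blk, Matrix.one_apply, Prod.ext_iff, h, h']

lemma Dm_mul_blk {n N : ℕ} (s0 : Matrix (Fin N) (Fin N) k)
    (F : ℕ → ℕ → Matrix (Fin N) (Fin N) k) :
    Dm n N s0 * blk n N F = blk n N (fun r c => s0 * F r c) := by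
  unfold Dm
  rw [blk_mul]
  apply blk_ext
  intro r c
  rw [Finset.sum_eq_single_of_mem r (Finset.mem_univ r)
    (fun t _ ht => by rw [if_neg (fun h => ht (Fin.ext h.symm)), zero_mul]),
    if_pos rfl]

lemma blk_mul_Dm {n N : ℕ} (s0 : Matrix (Fin N) (Fin N) k)
    (F : ℕ → ℕ → Matrix (Fin N) (Fin N) k) :
    blk n N F * Dm n N s0 = blk n N (fun r c => F r c * s0) := by
  unfold Dm
  rw [blk_mul]
  apply blk_ext
  intro r c
  rw [Finset.sum_eq_single_of_mem c (Finset.mem_univ c)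
    (fun t _ ht => by rw [if_neg (fun h => ht (Fin.ext h)), mul_zero]),
    if_pos rfl]

lemma Dm_mul_Dm {n N : ℕ} (a b : Matrix (Fin N) (Fin N) k) :
    Dm n N a * Dm n N b = Dm n N (a * b) := by
  rw [show Dm n N b = blk n N (fun r c => if r = c then b else 0) from rfl, Dm_mul_blk]
  apply blk_ext
  intro r c
  by_cases h : (r : ℕ) = (c : ℕ) <;> simp [Dm, blk, h]

/-- Factorization `S_i = (s_i ⊕ ⋯ ⊕ s_i) · (1 + C_i)`. -/
lemma S_factor {n N : ℕ} (g s : ℕ → Matrix (Fin N) (Fin N) k) (i : ℕ) :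
    S n N g s i = Dm n N (s i) * (1 + Cm n N g i) := by
  rw [Cm, ← blk_one (n := n) (N := N) (k := k), ← blk_add, Dm_mul_blk]
  unfold S
  apply blk_ext
  intro r c
  unfold Cf
  split_ifs <;> first
    | (exfalso; omega)
    | noncomm_ring

/-- `C_i` commutes with a constant block-diagonal matrix whose block commutes
with `g_i` and `g_{i+1}`. -/
lemma Cm_comm_Dm {n N : ℕ} (g : ℕ → Matrix (Fin N) (Fin N) k) (i : ℕ)
    (s0 : Matrix (Fin N) (Fin N) k)
    (hc1 : s0 * g i = g i * s0) (hc2 : s0 * g (i + 1) = g (i + 1) * s0) :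
    Cm n N g i * Dm n N s0 = Dm n N s0 * Cm n N g i := by
  rw [Cm, blk_mul_Dm, Dm_mul_blk]
  apply blk_ext
  intro r c
  unfold Cf
  split_ifs <;> simp [hc1, hc2, neg_mul, mul_neg]

/-- `C_i C_j = 0` when the windows `{i, i+1}` and `{j, j+1}` are disjoint. -/
lemma Cm_mul_Cm {n N : ℕ} (g : ℕ → Matrix (Fin N) (Fin N) k) (i j : ℕ)
    (h2 : i ≠ j + 1) (h3 : i + 1 ≠ j) (h4 : i + 1 ≠ j + 1) :
    Cm n N g i * Cm n N g j = 0 := by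
  rw [Cm, Cm, blk_mul, ← blk_zero (n := n) (N := N) (k := k)]
  apply blk_ext
  intro r c
  refine Finset.sum_eq_zero fun t _ => ?_
  unfold Cf
  split_ifs <;> first
    | (exfalso; omega)
    | simp

/-- Far commutation for the Long–Moody matrices:
`S_i S_j = S_j S_i` whenever `|i − j| ≥ 2`. -/
theorem longMoody_far_commutation
    (N n : ℕ) (hN : 1 ≤ N) (hn : 2 ≤ n)
    (g s : ℕ → Matrix (Fin N) (Fin N) k) (lam : k) (hlam : lam ≠ 0)
    (hgu : ∀ j, j < n → IsUnit (g j))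
    (hsu : ∀ i, i + 1 < n → IsUnit (s i))
    (hbr1 : ∀ i, i + 2 < n → s i * s (i + 1) * s i = s (i + 1) * s i * s (i + 1))
    (hbr2 : ∀ i j, i + 1 < n → j + 1 < n → (i + 2 ≤ j ∨ j + 2 ≤ i) →
      s i * s j = s j * s i)
    (ha1 : ∀ i, i + 1 < n → s i * g i = g (i + 1) * s i)
    (ha2 : ∀ i, i + 1 < n → g (i + 1) * s i * g (i + 1) = g i * g (i + 1) * s i)
    (ha3 : ∀ i j, i + 1 < n → j < n → j ≠ i → j ≠ i + 1 → s i * g j = g j * s i) :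
    ∀ i j, i + 1 < n → j + 1 < n → (i + 2 ≤ j ∨ j + 2 ≤ i) →
      S n N g s i * S n N g s j = S n N g s j * S n N g s i := by
  intro i j hi hj hfar
  -- commutation relations between the scalars involved
  have hss : s i * s j = s j * s i := hbr2 i j hi hj hfar
  have hgi : s j * g i = g i * s j :=
    ha3 j i hj (by omega) (by omega) (by omega)
  have hgi1 : s j * g (i + 1) = g (i + 1) * s j :=
    ha3 j (i + 1) hj (by omega) (by omega) (by omega)
  have hgj : s i * g j = g j * s i :=
    ha3 i j hi (by omega) (by omega) (by omega)
  have hgj1 : s i * g (j + 1) = g (j + 1) * s i :=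
    ha3 i (j + 1) hi (by omega) (by omega) (by omega)
  set A := Dm n N (s i) with hA
  set B := (1 : Matrix (Fin n × Fin N) (Fin n × Fin N) k) + Cm n N g i with hB
  set C := Dm n N (s j) with hC
  set D := (1 : Matrix (Fin n × Fin N) (Fin n × Fin N) k) + Cm n N g j with hD
  have hAC : A * C = C * A := by
    rw [hA, hC, Dm_mul_Dm, Dm_mul_Dm, hss]
  have hBC : B * C = C * B := by
    rw [hB, add_mul, one_mul, mul_add, mul_one,
      Cm_comm_Dm g i (s j) hgi hgi1]
  have hAD : A * D = D * A := by
    rw [hA, hD, mul_add, mul_one, add_mul, one_mul,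
      Cm_comm_Dm g j (s i) hgj hgj1]
  have hBD : B * D = D * B := by
    have h0 : Cm n N g i * Cm n N g j = 0 :=
      Cm_mul_Cm g i j (by omega) (by omega) (by omega)
    have h0' : Cm n N g j * Cm n N g i = 0 :=
      Cm_mul_Cm g j i (by omega) (by omega) (by omega)
    rw [hB, hD]
    simp only [mul_add, add_mul, mul_one, one_mul, h0, h0', add_zero]
    abel
  rw [S_factor g s i, S_factor g s j, ← hA, ← hB, ← hC, ← hD]
  calc A * B * (C * D)
      = A * ((B * C) * D) := by rw [mul_assoc, mul_assoc]
    _ = A * ((C * B) * D) := by rw [hBC]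
    _ = (A * C) * (B * D) := by rw [mul_assoc C B D, ← mul_assoc, ← mul_assoc, mul_assoc (A * C)]
    _ = (C * A) * (D * B) := by rw [hAC, hBD]
    _ = C * ((A * D) * B) := by rw [mul_assoc, ← mul_assoc A D B]
    _ = C * ((D * A) * B) := by rw [hAD]
    _ = C * D * (A * B) := by rw [mul_assoc D A B, ← mul_assoc]

end KLM
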